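/- Under assumptions (A1), (A2), (A3), the map f is continuous and strictly increasing on the interval [τ*_1, τ*_0], and it maps [τ*_1, τ*_0] into itself. -/

import Mathlib

open Set

/-- A strictly monotone function on `Icc a b` that is surjective onto
`Icc (f a) (f b)` is continuous on `Icc a b`. -/
lemma strictMonoOn_continuousOn_of_surjOn {f : ℝ → ℝ} {a b : ℝ} (hab : a ≤ b)
    (hmono : StrictMonoOn f (Icc a b))
    (hsurj : SurjOn f (Icc a b) (Icc (f a) (f b))) :
    ContinuousOn f (Icc a b) := by
  have hR : ∀ x ∈ Icc a b, x < b → ContinuousWithinAt f (Ici x) x := by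
    intro x hx hxb
    refine hmono.continuousWithinAt_right_of_exists_between
      (Icc_mem_nhdsGE_of_mem ⟨hx.1, hxb⟩) ?_
    intro y hy
    have hfxb : f x < f b := hmono hx (right_mem_Icc.2 hab) hxb
    set z := min y (f b) with hz
    have hz1 : f x < z := lt_min hy hfxb
    have hz2 : z ≤ f b := min_le_right _ _
    have hza : f a ≤ z := le_trans (hmono.monotoneOn (left_mem_Icc.2 hab) hx hx.1) hz1.le
    obtain ⟨c, hc, hfc⟩ := hsurj ⟨hza, hz2⟩
    exact ⟨c, hc, by rw [hfc]; exact ⟨hz1, min_le_left _ _⟩⟩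
  have hL : ∀ x ∈ Icc a b, a < x → ContinuousWithinAt f (Iic x) x := by
    intro x hx hax
    refine hmono.continuousWithinAt_left_of_exists_between
      (Icc_mem_nhdsLE_of_mem ⟨hax, hx.2⟩) ?_
    intro y hy
    have hfax : f a < f x := hmono (left_mem_Icc.2 hab) hx hax
    set z := max y (f a) with hz
    have hz1 : z < f x := max_lt hy hfax
    have hz2 : f a ≤ z := le_max_right _ _
    have hzb : z ≤ f b := le_trans hz1.le (hmono.monotoneOn hx (right_mem_Icc.2 hab) hx.2)
    obtain ⟨c, hc, hfc⟩ := hsurj ⟨hz2, hzb⟩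
    exact ⟨c, hc, by rw [hfc]; exact ⟨le_max_left _ _, hz1⟩⟩
  intro x hx
  rcases eq_or_lt_of_le hx.1 with hax | hax
  · rcases eq_or_lt_of_le hx.2 with hxb | hxb
    · -- a = x = b, so Icc a b = {x}
      have : Icc a b = {x} := by rw [show b = x from hxb.symm, ← hax]; exact Icc_self a
      rw [this]
      exact continuousWithinAt_singleton
    · exact (hR x hx hxb).mono (by rw [hax]; exact fun y hy => hy.1)
  · rcases eq_or_lt_of_le hx.2 with hxb | hxb
    · exact (hL x hx hax).mono (by rw [hxb]; exact fun y hy => hy.2)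
    · refine ((hL x hx hax).union (hR x hx hxb)).mono ?_
      intro y hy
      rcases le_total y x with h | h
      · exact Or.inl h
      · exact Or.inr h

/-- Under (A1), (A2), (A3), the map f is continuous and strictly increasing on
[τ*_1, τ*_0], and maps this interval into itself. -/
theorem f_continuous_strictMono_mapsTo
    (c : ℝ) (hc : 0 < c) (ρ : ℝ → ℝ)
    (hρdiff : ∀ τ > (0 : ℝ), DifferentiableAt ℝ ρ τ)
    (hρlt : ∀ τ > (0 : ℝ), ρ τ < 1)
    (J : ℝ → ℝ) (hJ : ∀ τ, J τ = c * (1 - ρ τ))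
    (ψ : ℝ → ℝ) (hψdef : ∀ τ, ψ τ = 2 * τ * deriv J τ / J τ - 1)
    -- (A1): ψ is continuous and strictly decreasing on (0,∞), range contains [0,1]
    (hψcont : ContinuousOn ψ (Set.Ioi 0))
    (hψanti : StrictAntiOn ψ (Set.Ioi 0))
    (hψrange : Set.Icc (0 : ℝ) 1 ⊆ ψ '' Set.Ioi 0)
    -- τ*_r : unique solution in (0,∞) of ψ(τ) = r, for r ∈ [0,1]
    (t : ℝ → ℝ)
    (ht_pos : ∀ r ∈ Set.Icc (0 : ℝ) 1, 0 < t r)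
    (ht_sol : ∀ r ∈ Set.Icc (0 : ℝ) 1, ψ (t r) = r)
    (ht_uniq : ∀ r ∈ Set.Icc (0 : ℝ) 1, ∀ τ > (0 : ℝ), ψ τ = r → τ = t r)
    -- (A2): τ* is the unique positive solution of ψ(τ) = ρ(τ), and 0 < ρ(τ*) < 1
    (τstar : ℝ) (hτstar_pos : 0 < τstar) (hτstar_sol : ψ τstar = ρ τstar)
    (hτstar_uniq : ∀ τ > (0 : ℝ), ψ τ = ρ τ → τ = τstar)
    (hρτstar : 0 < ρ τstar ∧ ρ τstar < 1)
    -- (A3): ρ is positive and strictly decreasing on [τ*_1, τ*_0]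
    (hρpos : ∀ s ∈ Set.Icc (t 1) (t 0), 0 < ρ s)
    (hρanti : StrictAntiOn ρ (Set.Icc (t 1) (t 0)))
    -- f(s) = τ*_{ρ(s)}
    (f : ℝ → ℝ) (hf : ∀ s > (0 : ℝ), ρ s ∈ Set.Icc (0 : ℝ) 1 → f s = t (ρ s)) :
    ContinuousOn f (Set.Icc (t 1) (t 0)) ∧
    StrictMonoOn f (Set.Icc (t 1) (t 0)) ∧
    Set.MapsTo f (Set.Icc (t 1) (t 0)) (Set.Icc (t 1) (t 0)) := by
  have h0mem : (0 : ℝ) ∈ Icc (0 : ℝ) 1 := ⟨le_refl 0, zero_le_one⟩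
  have h1mem : (1 : ℝ) ∈ Icc (0 : ℝ) 1 := ⟨zero_le_one, le_refl 1⟩
  -- t is strictly antitone on [0,1]
  have tanti : ∀ r ∈ Icc (0 : ℝ) 1, ∀ r' ∈ Icc (0 : ℝ) 1, r < r' → t r' < t r := by
    intro r hr r' hr' hlt
    have htr : t r ∈ Ioi (0 : ℝ) := ht_pos r hr
    have htr' : t r' ∈ Ioi (0 : ℝ) := ht_pos r' hr'
    have := (hψanti.lt_iff_gt htr htr').mp (by rw [ht_sol r hr, ht_sol r' hr']; exact hlt)
    exact this
  have tanti_le : ∀ r ∈ Icc (0 : ℝ) 1, ∀ r' ∈ Icc (0 : ℝ) 1, r ≤ r' → t r' ≤ t r := by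
    intro r hr r' hr' hle
    rcases eq_or_lt_of_le hle with h | h
    · rw [h]
    · exact (tanti r hr r' hr' h).le
  have h10 : t 1 < t 0 := tanti 0 h0mem 1 h1mem one_pos
  have ht1pos : 0 < t 1 := ht_pos 1 h1mem
  -- basic facts for s in the interval
  have spos : ∀ s ∈ Icc (t 1) (t 0), (0 : ℝ) < s := fun s hs => lt_of_lt_of_le ht1pos hs.1
  have ρmem : ∀ s ∈ Icc (t 1) (t 0), ρ s ∈ Icc (0 : ℝ) 1 :=
    fun s hs => ⟨(hρpos s hs).le, (hρlt s (spos s hs)).le⟩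
  have hfeq : ∀ s ∈ Icc (t 1) (t 0), f s = t (ρ s) :=
    fun s hs => hf s (spos s hs) (ρmem s hs)
  -- strict monotonicity
  have hsm : StrictMonoOn f (Icc (t 1) (t 0)) := by
    intro s1 h1 s2 h2 h12
    rw [hfeq s1 h1, hfeq s2 h2]
    exact tanti (ρ s2) (ρmem s2 h2) (ρ s1) (ρmem s1 h1) (hρanti h1 h2 h12)
  -- maps-to
  have hmt : MapsTo f (Icc (t 1) (t 0)) (Icc (t 1) (t 0)) := by
    intro s hs
    rw [hfeq s hs]
    constructor
    · exact tanti_le (ρ s) (ρmem s hs) 1 h1mem (ρmem s hs).2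
    · exact tanti_le 0 h0mem (ρ s) (ρmem s hs) (ρmem s hs).1
  -- surjectivity onto [f(t 1), f(t 0)]
  have ht1mem : t 1 ∈ Icc (t 1) (t 0) := left_mem_Icc.2 h10.le
  have ht0mem : t 0 ∈ Icc (t 1) (t 0) := right_mem_Icc.2 h10.le
  have hsurj : SurjOn f (Icc (t 1) (t 0)) (Icc (f (t 1)) (f (t 0))) := by
    intro y hy
    rw [hfeq (t 1) ht1mem] at hy
    rw [hfeq (t 0) ht0mem] at hy
    have hρ1mem := ρmem (t 1) ht1mem
    have hρ0mem := ρmem (t 0) ht0mem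
    have h1le : t 1 ≤ t (ρ (t 1)) := tanti_le (ρ (t 1)) hρ1mem 1 h1mem hρ1mem.2
    have ypos : (0 : ℝ) < y := lt_of_lt_of_le ht1pos (le_trans h1le hy.1)
    have hyIoi : y ∈ Ioi (0 : ℝ) := ypos
    -- ψ y is between ρ (t 0) and ρ (t 1)
    have hub : ψ y ≤ ρ (t 1) := by
      have := (hψanti.le_iff_ge hyIoi (ht_pos (ρ (t 1)) hρ1mem)).mpr hy.1
      rwa [ht_sol (ρ (t 1)) hρ1mem] at this
    have hlb : ρ (t 0) ≤ ψ y := by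
      have := (hψanti.le_iff_ge (ht_pos (ρ (t 0)) hρ0mem) hyIoi).mpr hy.2
      rwa [ht_sol (ρ (t 0)) hρ0mem] at this
    have hψymem : ψ y ∈ Icc (0 : ℝ) 1 :=
      ⟨le_trans hρ0mem.1 hlb, le_trans hub hρ1mem.2⟩
    -- ρ is continuous on the interval, use IVT
    have hρcont : ContinuousOn ρ (Icc (t 1) (t 0)) := fun s hs =>
      ((hρdiff s (spos s hs)).continuousAt).continuousWithinAt
    have hIVT := intermediate_value_Icc' h10.le hρcont
    obtain ⟨s, hs, hρs⟩ := hIVT ⟨hlb, hub⟩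
    refine ⟨s, hs, ?_⟩
    rw [hfeq s hs, hρs]
    exact (ht_uniq (ψ y) hψymem y ypos rfl).symm
  exact ⟨strictMonoOn_continuousOn_of_surjOn h10.le hsm hsurj, hsm, hmt⟩
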